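/- Let G, F, V be vector spaces over ℂ, let D_min and E be subspaces of V with D_min ∩ E = {0}, and set D = D_min + E. Let A : D → G and K : F → G be linear maps such that the map Φ : D_min × F → G, Φ(u, c) = A u + K c, is bijective, and write its inverse as Φ⁻¹ g = (B g, T g) with linear maps B : G → D_min and T : G → F. Then the restriction A|_D : D → G is bijective if and only if F₀ := T ∘ (A|_E) : E → F is bijective. Moreover, in that case, with q : D → E the projection onto E along D_min, the inverse is given by (A|_D)⁻¹ = B + (id_D − B ∘ A|_D) ∘ F₀⁻¹ ∘ T (where B and id_D − B∘A|_D are regarded as maps into D), and one has F₀⁻¹ = q ∘ (A|_D)⁻¹ ∘ K and q ∘ (A|_D)⁻¹ = F₀⁻¹ ∘ T. -/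
import Mathlib


/-- Abstract reduction to the finite-dimensional quotient: bijectivity of the
realization on `D = Dmin ⊔ E` is equivalent to bijectivity of `F₀ = T ∘ A|_E`,
and explicit formulas for the inverse. -/
theorem stmt0 {G F V : Type*} [AddCommGroup G] [Module ℂ G]
    [AddCommGroup F] [Module ℂ F] [AddCommGroup V] [Module ℂ V]
    (Dmin E : Submodule ℂ V) (hdisj : Dmin ⊓ E = ⊥)
    (A : ↥(Dmin ⊔ E) →ₗ[ℂ] G) (K : F →ₗ[ℂ] G)
    (B : G →ₗ[ℂ] Dmin) (T : G →ₗ[ℂ] F)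
    (hbij : Function.Bijective (fun p : ↥Dmin × F =>
      A (Submodule.inclusion (le_sup_left : Dmin ≤ Dmin ⊔ E) p.1) + K p.2))
    (hright : ∀ g : G,
      A (Submodule.inclusion (le_sup_left : Dmin ≤ Dmin ⊔ E) (B g)) + K (T g) = g)
    (hleft : ∀ (u : Dmin) (c : F),
      B (A (Submodule.inclusion (le_sup_left : Dmin ≤ Dmin ⊔ E) u) + K c) = u ∧
      T (A (Submodule.inclusion (le_sup_left : Dmin ≤ Dmin ⊔ E) u) + K c) = c)
    (q : ↥(Dmin ⊔ E) →ₗ[ℂ] E)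
    (hq0 : ∀ u : Dmin, q (Submodule.inclusion (le_sup_left : Dmin ≤ Dmin ⊔ E) u) = 0)
    (hq1 : ∀ e : E, q (Submodule.inclusion (le_sup_right : E ≤ Dmin ⊔ E) e) = e) :
    (Function.Bijective A ↔
      Function.Bijective (fun e : E =>
        T (A (Submodule.inclusion (le_sup_right : E ≤ Dmin ⊔ E) e)))) ∧
    ∀ (Ainv : G →ₗ[ℂ] ↥(Dmin ⊔ E)) (F₀inv : F →ₗ[ℂ] E),
      (∀ g, A (Ainv g) = g) → (∀ d, Ainv (A d) = d) →
      (∀ c, T (A (Submodule.inclusion (le_sup_right : E ≤ Dmin ⊔ E) (F₀inv c))) = c) →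
      (∀ e : E, F₀inv (T (A (Submodule.inclusion (le_sup_right : E ≤ Dmin ⊔ E) e))) = e) →
      (∀ g, Ainv g =
        Submodule.inclusion (le_sup_left : Dmin ≤ Dmin ⊔ E) (B g) +
          (Submodule.inclusion (le_sup_right : E ≤ Dmin ⊔ E) (F₀inv (T g)) -
            Submodule.inclusion (le_sup_left : Dmin ≤ Dmin ⊔ E)
              (B (A (Submodule.inclusion (le_sup_right : E ≤ Dmin ⊔ E) (F₀inv (T g))))))) ∧
      (∀ c, F₀inv c = q (Ainv (K c))) ∧
      (∀ g, q (Ainv g) = F₀inv (T g)) := by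

  set i : ↥Dmin →ₗ[ℂ] ↥(Dmin ⊔ E) := Submodule.inclusion (le_sup_left : Dmin ≤ Dmin ⊔ E) with hi
  set j : ↥E →ₗ[ℂ] ↥(Dmin ⊔ E) := Submodule.inclusion (le_sup_right : E ≤ Dmin ⊔ E) with hj
  -- basic consequences of `hleft`
  have hB1 : ∀ u : Dmin, B (A (i u)) = u := by
    intro u; have := (hleft u 0).1; simpa using this
  have hT0 : ∀ u : Dmin, T (A (i u)) = 0 := by
    intro u; have := (hleft u 0).2; simpa using this
  have hBK : ∀ c : F, B (K c) = 0 := by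
    intro c; have := (hleft 0 c).1; simpa using this
  have hTK : ∀ c : F, T (K c) = c := by
    intro c; have := (hleft 0 c).2; simpa using this
  -- decomposition of elements of `Dmin ⊔ E`
  have hdec : ∀ d : ↥(Dmin ⊔ E), ∃ u : Dmin, d = i u + j (q d) := by
    intro d
    obtain ⟨u, hu, e, he, hue⟩ := Submodule.mem_sup.mp d.2
    have hd : d = i ⟨u, hu⟩ + j ⟨e, he⟩ := by
      apply Subtype.ext
      simp [hi, hj, hue.symm]
    have hqd : q d = ⟨e, he⟩ := by
      rw [hd, map_add, hq0, hq1, zero_add]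
    exact ⟨⟨u, hu⟩, by rw [hqd]; exact hd⟩
  have hTA : ∀ d : ↥(Dmin ⊔ E), T (A d) = T (A (j (q d))) := by
    intro d
    obtain ⟨u, hu⟩ := hdec d
    conv_lhs => rw [hu]
    rw [map_add, map_add, hT0, zero_add]
  have hkey : ∀ e : E, A (j e - i (B (A (j e)))) = K (T (A (j e))) := by
    intro e
    rw [map_sub]
    exact sub_eq_iff_eq_add'.mpr (hright (A (j e))).symm
  have hqe : ∀ e : E, q (j e - i (B (A (j e)))) = e := by
    intro e; rw [map_sub, hq1, hq0, sub_zero]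
  have hA_formula : ∀ (g : G) (e : E), T (A (j e)) = T g →
      A (i (B g) + (j e - i (B (A (j e))))) = g := by
    intro g e he
    rw [map_add, hkey, he, hright]
  constructor
  · constructor
    · intro hA
      constructor
      · intro e₁ e₂ h12
        simp only at h12
        have h : A (j e₁ - i (B (A (j e₁)))) = A (j e₂ - i (B (A (j e₂)))) := by
          rw [hkey, hkey, h12]
        have h' := hA.1 h
        have := congrArg q h'
        rwa [hqe, hqe] at this
      · intro c
        obtain ⟨d, hd⟩ := hA.2 (K c)
        refine ⟨q d, ?_⟩
        show T (A (j (q d))) = c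
        rw [← hTA d, hd, hTK]
    · intro hF
      constructor
      · intro d₁ d₂ hd
        have hq' : q d₁ = q d₂ := by
          apply hF.1
          show T (A (j (q d₁))) = T (A (j (q d₂)))
          rw [← hTA, ← hTA, hd]
        obtain ⟨u₁, hu₁⟩ := hdec d₁
        obtain ⟨u₂, hu₂⟩ := hdec d₂
        have hBadd : ∀ (u : Dmin) (e : E), B (A (i u + j e)) = u + B (A (j e)) := by
          intro u e; rw [map_add, map_add, hB1]
        have h1 : u₁ + B (A (j (q d₁))) = u₂ + B (A (j (q d₂))) := by
          rw [← hBadd, ← hBadd, ← hu₁, ← hu₂, hd]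
        rw [hq'] at h1
        have hu : u₁ = u₂ := add_right_cancel h1
        rw [hu₁, hu₂, hq', hu]
      · intro g
        obtain ⟨e, he⟩ := hF.2 (T g)
        exact ⟨i (B g) + (j e - i (B (A (j e)))), hA_formula g e he⟩
  · intro Ainv F₀inv hAr hAl hFr hFl
    refine ⟨?_, ?_, ?_⟩
    · intro g
      have hF : T (A (j (F₀inv (T g)))) = T g := hFr (T g)
      have h := hA_formula g (F₀inv (T g)) hF
      calc Ainv g
          = Ainv (A (i (B g) + (j (F₀inv (T g)) - i (B (A (j (F₀inv (T g)))))))) := by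
            rw [h]
        _ = i (B g) + (j (F₀inv (T g)) - i (B (A (j (F₀inv (T g)))))) := hAl _
    · intro c
      have h : T (A (j (q (Ainv (K c))))) = c := by
        rw [← hTA, hAr, hTK]
      conv_lhs => rw [← h]
      exact hFl _
    · intro g
      have h : T (A (j (q (Ainv g)))) = T g := by rw [← hTA, hAr]
      rw [← h]
      exact (hFl _).symm
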